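/- Let a, b, ℓ > 0 and let i(ω) denote the normalized width of the discrete bounding rectangle of the random segment S_ω of length ℓ. Define f(z) = z·arccos(z) − √(1−z²) + 1 for 0 ≤ z ≤ 1. Then for every n ∈ ℕ, n ≥ 1: P[i ≥ n] = 1 if n = 1; P[i ≥ n] = (2ℓ/(π·a))·( f(a·(n−1)/ℓ) − f(a·(n−2)/ℓ) ) if 2 ≤ n < ℓ/a + 1; P[i ≥ n] = (2ℓ/(π·a))·( 1 − f(a·(n−2)/ℓ) ) if ℓ/a + 1 ≤ n < ℓ/a + 2; and P[i ≥ n] = 0 if n ≥ ℓ/a + 2. -/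

import Mathlib

open Set

/-- Interior of the tile `T(k,l)` of the `a×b` grid. -/
noncomputable def tileInt (a b : ℝ) (k l : ℤ) : Set (ℝ × ℝ) :=
  Set.Ioo ((k : ℝ) * a) (((k : ℝ) + 1) * a) ×ˢ Set.Ioo ((l : ℝ) * b) (((l : ℝ) + 1) * b)

/-- Number of tiles of the `a×b` grid visited by the closed segment with endpoints `p`, `q`. -/
noncomputable def visitCount (a b : ℝ) (p q : ℝ × ℝ) : ℕ :=
  Set.ncard {kl : ℤ × ℤ | (segment ℝ p q ∩ tileInt a b kl.1 kl.2).Nonempty}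

/-- Normalized width of the discrete bounding rectangle of the segment with endpoints `p`, `q`. -/
noncomputable def normWidth (a : ℝ) (p q : ℝ × ℝ) : ℤ :=
  ⌈max p.1 q.1 / a⌉ - ⌊min p.1 q.1 / a⌋

/-- Normalized height of the discrete bounding rectangle of the segment with endpoints `p`, `q`. -/
noncomputable def normHeight (b : ℝ) (p q : ℝ × ℝ) : ℤ :=
  ⌈max p.2 q.2 / b⌉ - ⌊min p.2 q.2 / b⌋

/-- Euclidean length of the segment with endpoints `p`, `q`. -/
noncomputable def segLen (p q : ℝ × ℝ) : ℝ :=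
  Real.sqrt ((p.1 - q.1) ^ 2 + (p.2 - q.2) ^ 2)

/-- `maxTiles a b ℓ` : maximum number of tiles of the `a×b` grid visited by a segment of length `ℓ`. -/
noncomputable def maxTiles (a b ℓ : ℝ) : ℕ :=
  sSup {n : ℕ | ∃ p q : ℝ × ℝ, segLen p q = ℓ ∧ visitCount a b p q = n}

/-- `infLen a b N` : infimum of lengths of segments visiting at least `N` tiles of the `a×b` grid. -/
noncomputable def infLen (a b : ℝ) (N : ℕ) : ℝ :=
  sInf {ℓ : ℝ | 0 < ℓ ∧ ∃ p q : ℝ × ℝ, segLen p q = ℓ ∧ N ≤ visitCount a b p q}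

/-- `minIntLen N` : minimum positive integer length of a segment visiting at least `N` tiles
of the unit square grid. -/
noncomputable def minIntLen (N : ℕ) : ℕ :=
  sInf {L : ℕ | 1 ≤ L ∧ ∃ p q : ℝ × ℝ, segLen p q = (L : ℝ) ∧ N ≤ visitCount 1 1 p q}

open MeasureTheory

/-- Uniform probability measure on `Ω = [0,a) × [0,b) × [0,2π)`. -/
noncomputable def unifP (a b : ℝ) : Measure (ℝ × ℝ × ℝ) :=
  (ENNReal.ofReal (2 * Real.pi * a * b))⁻¹ •
    (volume.restrict (Set.Ico (0:ℝ) a ×ˢ Set.Ico (0:ℝ) b ×ˢ Set.Ico (0:ℝ) (2 * Real.pi)))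

/-- First endpoint of the random segment determined by `ω = (x₁, y₁, θ)`. -/
noncomputable def segPt1 (ω : ℝ × ℝ × ℝ) : ℝ × ℝ := (ω.1, ω.2.1)

/-- Second endpoint of the random segment of length `ℓ` determined by `ω = (x₁, y₁, θ)`. -/
noncomputable def segPt2 (ℓ : ℝ) (ω : ℝ × ℝ × ℝ) : ℝ × ℝ :=
  (ω.1 + ℓ * Real.cos ω.2.2, ω.2.1 + ℓ * Real.sin ω.2.2)

/-- The function `f(z) = z·arccos z − √(1−z²) + 1`. -/
noncomputable def buffonF (z : ℝ) : ℝ := z * Real.arccos z - Real.sqrt (1 - z ^ 2) + 1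


open Real in
private lemma stmt18_intLinCos (ℓ s u v : ℝ) :
    ∫ θ in u..v, (ℓ * Real.cos θ - s) = ℓ * (Real.sin v - Real.sin u) - s * (v - u) := by
  rw [intervalIntegral.integral_sub (by apply Continuous.intervalIntegrable; continuity)
    (by apply Continuous.intervalIntegrable; continuity)]
  rw [intervalIntegral.integral_const_mul, integral_cos, intervalIntegral.integral_const,
    smul_eq_mul]
  ring

private lemma stmt18_contH (a ℓ s : ℝ) :
    Continuous fun θ : ℝ => min a (max 0 (ℓ * Real.cos θ - s)) :=
  continuous_const.min (continuous_const.max (by continuity))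

open Real in
private lemma stmt18_quadRed (K : ℝ → ℝ) (hK : Continuous K) :
    ∫ θ in (0:ℝ)..(2*π), K |Real.cos θ| = 4 * ∫ θ in (0:ℝ)..(π/2), K (Real.cos θ) := by
  have hc : Continuous fun θ => K |Real.cos θ| := hK.comp (continuous_abs.comp Real.continuous_cos)
  have hint : ∀ u v : ℝ, IntervalIntegrable (fun θ => K |Real.cos θ|) MeasureTheory.volume u v :=
    fun u v => hc.intervalIntegrable u v
  have pi_pos := Real.pi_pos
  have h1 : ∫ θ in (0:ℝ)..(π/2), K |Real.cos θ| = ∫ θ in (0:ℝ)..(π/2), K (Real.cos θ) := by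
    apply intervalIntegral.integral_congr
    intro θ hθ
    rw [uIcc_of_le (by linarith)] at hθ
    simp only
    rw [abs_of_nonneg (Real.cos_nonneg_of_mem_Icc ⟨by linarith [hθ.1], hθ.2⟩)]
  have h2 : ∫ θ in (π/2:ℝ)..π, K |Real.cos θ| = ∫ θ in (0:ℝ)..(π/2), K (Real.cos θ) := by
    have e : ∫ θ in (π/2:ℝ)..π, K |Real.cos θ|
        = ∫ θ in (π/2:ℝ)..π, (fun t => K (Real.cos t)) (π - θ) := by
      apply intervalIntegral.integral_congr
      intro θ hθ
      rw [uIcc_of_le (by linarith)] at hθ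
      simp only [Real.cos_pi_sub]
      rw [abs_of_nonpos (Real.cos_nonpos_of_pi_div_two_le_of_le hθ.1 (by linarith [hθ.2]))]
    rw [e, intervalIntegral.integral_comp_sub_left (fun t => K (Real.cos t)) π,
      (by ring : π - π = 0), (by ring : π - π/2 = π/2)]
  have h3 : ∫ θ in (π:ℝ)..(3*π/2), K |Real.cos θ| = ∫ θ in (0:ℝ)..(π/2), K (Real.cos θ) := by
    have e : ∫ θ in (π:ℝ)..(3*π/2), K |Real.cos θ|
        = ∫ θ in (π:ℝ)..(3*π/2), (fun t => K (Real.cos t)) (θ - π) := by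
      apply intervalIntegral.integral_congr
      intro θ hθ
      rw [uIcc_of_le (by linarith)] at hθ
      simp only [Real.cos_sub_pi]
      rw [abs_of_nonpos (Real.cos_nonpos_of_pi_div_two_le_of_le (by linarith [hθ.1])
        (by linarith [hθ.2]))]
    rw [e, intervalIntegral.integral_comp_sub_right (fun t => K (Real.cos t)) π,
      (by ring : π - π = 0), (by ring : 3*π/2 - π = π/2)]
  have h4 : ∫ θ in (3*π/2:ℝ)..(2*π), K |Real.cos θ| = ∫ θ in (0:ℝ)..(π/2), K (Real.cos θ) := by
    have hcos : ∀ θ : ℝ, Real.cos (2*π - θ) = Real.cos θ := by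
      intro θ; rw [Real.cos_sub]; simp
    have e : ∫ θ in (3*π/2:ℝ)..(2*π), K |Real.cos θ|
        = ∫ θ in (3*π/2:ℝ)..(2*π), (fun t => K (Real.cos t)) (2*π - θ) := by
      apply intervalIntegral.integral_congr
      intro θ hθ
      rw [uIcc_of_le (by linarith)] at hθ
      simp only [hcos]
      have h0 : 0 ≤ Real.cos (2*π - θ) :=
        Real.cos_nonneg_of_mem_Icc ⟨by linarith [hθ.2], by linarith [hθ.1]⟩
      rw [hcos] at h0
      rw [abs_of_nonneg h0]
    rw [e, intervalIntegral.integral_comp_sub_left (fun t => K (Real.cos t)) (2*π),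
      (by ring : 2*π - 2*π = 0), (by ring : 2*π - 3*π/2 = π/2)]
  rw [← intervalIntegral.integral_add_adjacent_intervals (hint 0 π) (hint π (2*π)),
      ← intervalIntegral.integral_add_adjacent_intervals (hint 0 (π/2)) (hint (π/2) π),
      ← intervalIntegral.integral_add_adjacent_intervals (hint π (3*π/2)) (hint (3*π/2) (2*π)),
      h1, h2, h3, h4]
  ring

open Real in
private lemma stmt18_JA (a ℓ s : ℝ) (ha : 0 < a) (hℓ : 0 < ℓ) (hs : 0 ≤ s) (hsa : s + a < ℓ) :
    ∫ θ in (0:ℝ)..(π/2), min a (max 0 (ℓ * Real.cos θ - s)) =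
      ℓ * (buffonF ((s+a)/ℓ) - buffonF (s/ℓ)) := by
  have hℓ0 : ℓ ≠ 0 := hℓ.ne'
  have hint : ∀ u v : ℝ,
      IntervalIntegrable (fun θ => min a (max 0 (ℓ * Real.cos θ - s))) MeasureTheory.volume u v :=
    fun u v => (stmt18_contH a ℓ s).intervalIntegrable u v
  set α : ℝ := s/ℓ with hα
  set β : ℝ := (s+a)/ℓ with hβ
  have hℓα : ℓ * α = s := by rw [hα]; field_simp
  have hℓβ : ℓ * β = s + a := by rw [hβ]; field_simp
  have hα0 : 0 ≤ α := div_nonneg hs hℓ.le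
  have hαβ : α < β := by rw [hα, hβ, div_lt_div_iff₀ hℓ hℓ]; nlinarith
  have hβ1 : β < 1 := by rw [hβ, div_lt_one hℓ]; linarith
  have hα1 : α < 1 := lt_trans hαβ hβ1
  set tα : ℝ := Real.arccos α with htα
  set tβ : ℝ := Real.arccos β with htβ
  have hcα : Real.cos tα = α := Real.cos_arccos (by linarith) hα1.le
  have hcβ : Real.cos tβ = β := Real.cos_arccos (by linarith) hβ1.le
  have htβtα : tβ < tα :=
    Real.strictAntiOn_arccos ⟨by linarith, hα1.le⟩ ⟨by linarith, hβ1.le⟩ hαβ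
  have htβ0 : 0 ≤ tβ := Real.arccos_nonneg β
  have htα2 : tα ≤ π/2 := Real.arccos_le_pi_div_two.2 hα0
  have htαπ : tα ≤ π := Real.arccos_le_pi α
  have p1 : ∫ θ in (0:ℝ)..tβ, min a (max 0 (ℓ * Real.cos θ - s)) = tβ * a := by
    rw [intervalIntegral.integral_congr (g := fun _ => a), intervalIntegral.integral_const,
      smul_eq_mul, sub_zero]
    intro θ hθ
    rw [uIcc_of_le htβ0] at hθ
    have hc : β ≤ Real.cos θ := by
      rw [← hcβ]
      exact Real.cos_le_cos_of_nonneg_of_le_pi hθ.1 (by linarith [hθ.2]) hθ.2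
    have h1 : a ≤ ℓ * Real.cos θ - s := by nlinarith
    show min a (max 0 (ℓ * Real.cos θ - s)) = a
    rw [max_eq_right (by linarith), min_eq_left h1]
  have p2 : ∫ θ in tβ..tα, min a (max 0 (ℓ * Real.cos θ - s)) =
      ℓ * (Real.sqrt (1 - α^2) - Real.sqrt (1 - β^2)) - s * (tα - tβ) := by
    rw [intervalIntegral.integral_congr (g := fun θ => ℓ * Real.cos θ - s), stmt18_intLinCos]
    · rw [htα, htβ, Real.sin_arccos, Real.sin_arccos]
    · intro θ hθ
      rw [uIcc_of_le htβtα.le] at hθ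
      have hc1 : Real.cos θ ≤ β := by
        rw [← hcβ]
        exact Real.cos_le_cos_of_nonneg_of_le_pi htβ0 (by linarith [hθ.2]) hθ.1
      have hc2 : α ≤ Real.cos θ := by
        rw [← hcα]
        exact Real.cos_le_cos_of_nonneg_of_le_pi (by linarith [hθ.1]) htαπ hθ.2
      have h1 : 0 ≤ ℓ * Real.cos θ - s := by nlinarith
      have h2 : ℓ * Real.cos θ - s ≤ a := by nlinarith
      show min a (max 0 (ℓ * Real.cos θ - s)) = ℓ * Real.cos θ - s
      rw [max_eq_right h1, min_eq_right h2]
  have p3 : ∫ θ in tα..(π/2), min a (max 0 (ℓ * Real.cos θ - s)) = 0 := by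
    rw [intervalIntegral.integral_congr (g := fun _ => (0:ℝ))]
    · simp
    · intro θ hθ
      rw [uIcc_of_le htα2] at hθ
      have hc : Real.cos θ ≤ α := by
        rw [← hcα]
        exact Real.cos_le_cos_of_nonneg_of_le_pi (by linarith [hθ.1, htβ0])
          (by linarith [hθ.2, Real.pi_pos]) hθ.1
      have h1 : ℓ * Real.cos θ - s ≤ 0 := by nlinarith
      show min a (max 0 (ℓ * Real.cos θ - s)) = 0
      rw [max_eq_left h1, min_eq_right ha.le]
  rw [← intervalIntegral.integral_add_adjacent_intervals (hint 0 tβ) (hint tβ (π/2)),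
    ← intervalIntegral.integral_add_adjacent_intervals (hint tβ tα) (hint tα (π/2)),
    p1, p2, p3]
  simp only [buffonF]
  linear_combination (-tβ) * hℓβ + tα * hℓα

open Real in
private lemma stmt18_JB (a ℓ s : ℝ) (ha : 0 < a) (hℓ : 0 < ℓ) (hs : 0 ≤ s) (hsℓ : s < ℓ)
    (hℓsa : ℓ ≤ s + a) :
    ∫ θ in (0:ℝ)..(π/2), min a (max 0 (ℓ * Real.cos θ - s)) =
      ℓ * (1 - buffonF (s/ℓ)) := by
  have hℓ0 : ℓ ≠ 0 := hℓ.ne'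
  have hint : ∀ u v : ℝ,
      IntervalIntegrable (fun θ => min a (max 0 (ℓ * Real.cos θ - s))) MeasureTheory.volume u v :=
    fun u v => (stmt18_contH a ℓ s).intervalIntegrable u v
  set α : ℝ := s/ℓ with hα
  have hℓα : ℓ * α = s := by rw [hα]; field_simp
  have hα0 : 0 ≤ α := div_nonneg hs hℓ.le
  have hα1 : α < 1 := by rw [hα, div_lt_one hℓ]; linarith
  set tα : ℝ := Real.arccos α with htα
  have hcα : Real.cos tα = α := Real.cos_arccos (by linarith) hα1.le
  have htα0 : 0 ≤ tα := Real.arccos_nonneg α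
  have htα2 : tα ≤ π/2 := Real.arccos_le_pi_div_two.2 hα0
  have htαπ : tα ≤ π := Real.arccos_le_pi α
  have p1 : ∫ θ in (0:ℝ)..tα, min a (max 0 (ℓ * Real.cos θ - s)) =
      ℓ * (Real.sqrt (1 - α^2) - 0) - s * (tα - 0) := by
    rw [intervalIntegral.integral_congr (g := fun θ => ℓ * Real.cos θ - s), stmt18_intLinCos]
    · rw [htα, Real.sin_arccos, Real.sin_zero]
    · intro θ hθ
      rw [uIcc_of_le htα0] at hθ
      have hc1 : Real.cos θ ≤ 1 := Real.cos_le_one θ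
      have hc2 : α ≤ Real.cos θ := by
        rw [← hcα]
        exact Real.cos_le_cos_of_nonneg_of_le_pi hθ.1 htαπ hθ.2
      have h1 : 0 ≤ ℓ * Real.cos θ - s := by nlinarith
      have h2 : ℓ * Real.cos θ - s ≤ a := by nlinarith
      show min a (max 0 (ℓ * Real.cos θ - s)) = ℓ * Real.cos θ - s
      rw [max_eq_right h1, min_eq_right h2]
  have p3 : ∫ θ in tα..(π/2), min a (max 0 (ℓ * Real.cos θ - s)) = 0 := by
    rw [intervalIntegral.integral_congr (g := fun _ => (0:ℝ))]
    · simp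
    · intro θ hθ
      rw [uIcc_of_le htα2] at hθ
      have hc : Real.cos θ ≤ α := by
        rw [← hcα]
        exact Real.cos_le_cos_of_nonneg_of_le_pi (by linarith [hθ.1])
          (by linarith [hθ.2, Real.pi_pos]) hθ.1
      have h1 : ℓ * Real.cos θ - s ≤ 0 := by nlinarith
      show min a (max 0 (ℓ * Real.cos θ - s)) = 0
      rw [max_eq_left h1, min_eq_right ha.le]
  rw [← intervalIntegral.integral_add_adjacent_intervals (hint 0 tα) (hint tα (π/2)),
    p1, p3]
  simp only [buffonF]
  linear_combination tα * hℓα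

private lemma stmt18_sliceVol (a : ℝ) (ha : 0 < a) (n : ℕ) (t : ℝ) :
    volume {x : ℝ | x ∈ Set.Ico (0:ℝ) a ∧
        (n:ℤ) ≤ ⌈max x (x+t) / a⌉ - ⌊min x (x+t) / a⌋} =
      ENNReal.ofReal (min a (max 0 (|t| - ((n:ℝ) - 2) * a))) := by
  rcases le_or_gt 0 t with ht | ht
  · set u : ℝ := ((n:ℝ) - 1) * a - t with hu
    have habs : |t| - ((n:ℝ) - 2) * a = a - u := by rw [abs_of_nonneg ht, hu]; ring
    rw [habs]
    have hE : {x : ℝ | x ∈ Set.Ico (0:ℝ) a ∧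
        (n:ℤ) ≤ ⌈max x (x+t) / a⌉ - ⌊min x (x+t) / a⌋} =
        {x : ℝ | (0 ≤ x ∧ x < a) ∧ u < x} := by
      ext x
      simp only [Set.mem_setOf_eq, Set.mem_Ico]
      constructor
      · rintro ⟨⟨hx0, hxa⟩, hcond⟩
        refine ⟨⟨hx0, hxa⟩, ?_⟩
        rw [max_eq_right (by linarith : x ≤ x + t), min_eq_left (by linarith : x ≤ x + t),
          Int.floor_eq_zero_iff.2 ⟨div_nonneg hx0 ha.le, (div_lt_one ha).2 hxa⟩, sub_zero] at hcond
        have h' : ((n:ℤ) - 1) < ⌈(x+t)/a⌉ := by omega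
        have h2 : (((n:ℤ) - 1 : ℤ) : ℝ) < (x + t) / a := Int.lt_ceil.1 h'
        rw [lt_div_iff₀ ha] at h2
        push_cast at h2
        rw [hu]; nlinarith
      · rintro ⟨⟨hx0, hxa⟩, hux⟩
        refine ⟨⟨hx0, hxa⟩, ?_⟩
        rw [max_eq_right (by linarith : x ≤ x + t), min_eq_left (by linarith : x ≤ x + t),
          Int.floor_eq_zero_iff.2 ⟨div_nonneg hx0 ha.le, (div_lt_one ha).2 hxa⟩, sub_zero]
        have h1 : (((n:ℤ) - 1 : ℤ) : ℝ) < (x + t) / a := by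
          rw [lt_div_iff₀ ha]; push_cast; rw [hu] at hux; nlinarith
        have := Int.lt_ceil.2 h1
        omega
    rw [hE]
    rcases lt_or_ge u 0 with hu0 | hu0
    · have h : {x : ℝ | (0 ≤ x ∧ x < a) ∧ u < x} = Set.Ico 0 a := by
        ext x; simp only [Set.mem_setOf_eq, Set.mem_Ico]
        exact ⟨fun h => h.1, fun h => ⟨h, by linarith [h.1]⟩⟩
      rw [h, Real.volume_Ico, sub_zero,
        max_eq_right (by linarith : (0:ℝ) ≤ a - u), min_eq_left (by linarith : a ≤ a - u)]
    · have h : {x : ℝ | (0 ≤ x ∧ x < a) ∧ u < x} = Set.Ioo u a := by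
        ext x; simp only [Set.mem_setOf_eq, Set.mem_Ioo]
        exact ⟨fun h => ⟨h.2, h.1.2⟩, fun h => ⟨⟨by linarith [h.1], h.2⟩, h.1⟩⟩
      rw [h, Real.volume_Ioo]
      rcases le_or_gt 0 (a - u) with hau | hau
      · rw [max_eq_right hau, min_eq_right (by linarith : a - u ≤ a)]
      · rw [max_eq_left hau.le, min_eq_right ha.le, ENNReal.ofReal_zero,
          ENNReal.ofReal_of_nonpos hau.le]
  · set v : ℝ := (2 - (n:ℝ)) * a - t with hv
    have habs : |t| - ((n:ℝ) - 2) * a = v := by rw [abs_of_neg ht, hv]; ring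
    rw [habs]
    set E : Set ℝ := {x : ℝ | x ∈ Set.Ico (0:ℝ) a ∧
        (n:ℤ) ≤ ⌈max x (x+t) / a⌉ - ⌊min x (x+t) / a⌋} with hEdef
    have hE : E ∩ Set.Ioi 0 = Set.Ioo 0 (min a v) := by
      ext x
      simp only [hEdef, Set.mem_inter_iff, Set.mem_setOf_eq, Set.mem_Ico, Set.mem_Ioi,
        Set.mem_Ioo, lt_min_iff]
      constructor
      · rintro ⟨⟨⟨hx0, hxa⟩, hcond⟩, hx0'⟩
        refine ⟨hx0', hxa, ?_⟩
        rw [max_eq_left (by linarith : x + t ≤ x),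
          min_eq_right (by linarith : x + t ≤ x)] at hcond
        have hceil : ⌈x / a⌉ = 1 := by
          refine le_antisymm (Int.ceil_le.2 ?_) ?_
          · push_cast; rw [div_le_one ha]; linarith
          · have h0 : (0:ℤ) < ⌈x/a⌉ := Int.lt_ceil.2 (by push_cast; positivity)
            omega
        rw [hceil] at hcond
        have hfl : ⌊(x + t) / a⌋ ≤ 1 - (n:ℤ) := by omega
        have h2 := Int.floor_le_iff.1 hfl
        rw [div_lt_iff₀ ha] at h2
        push_cast at h2
        rw [hv]; nlinarith
      · rintro ⟨hx0', hxa, hxv⟩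
        refine ⟨⟨⟨hx0'.le, hxa⟩, ?_⟩, hx0'⟩
        rw [max_eq_left (by linarith : x + t ≤ x), min_eq_right (by linarith : x + t ≤ x)]
        have hceil : ⌈x / a⌉ = 1 := by
          refine le_antisymm (Int.ceil_le.2 ?_) ?_
          · push_cast; rw [div_le_one ha]; linarith
          · have h0 : (0:ℤ) < ⌈x/a⌉ := Int.lt_ceil.2 (by push_cast; positivity)
            omega
        rw [hceil]
        have hfl : ⌊(x + t) / a⌋ ≤ 1 - (n:ℤ) := by
          rw [Int.floor_le_iff, div_lt_iff₀ ha]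
          push_cast
          rw [hv] at hxv; nlinarith
        omega
    have hsub : E ⊆ (E ∩ Set.Ioi 0) ∪ {0} := by
      intro x hx
      rcases eq_or_lt_of_le hx.1.1 with h | h
      · right; simp [← h]
      · left; exact ⟨hx, h⟩
    have hvol : volume E = volume (E ∩ Set.Ioi 0) := by
      refine le_antisymm ?_ (measure_mono Set.inter_subset_left)
      calc volume E ≤ volume ((E ∩ Set.Ioi 0) ∪ {0}) := measure_mono hsub
        _ ≤ volume (E ∩ Set.Ioi 0) + volume ({0} : Set ℝ) := measure_union_le _ _
        _ = volume (E ∩ Set.Ioi 0) := by simp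
    rw [hvol, hE, Real.volume_Ioo, sub_zero]
    rcases le_or_gt 0 v with hv0 | hv0
    · rw [max_eq_right hv0]
    · rw [max_eq_left hv0.le, min_eq_right ha.le, min_eq_right (by linarith : v ≤ a),
        ENNReal.ofReal_zero, ENNReal.ofReal_of_nonpos hv0.le]

private lemma stmt18_contG (a ℓ s : ℝ) :
    Continuous fun θ : ℝ => min a (max 0 (ℓ * |Real.cos θ| - s)) :=
  continuous_const.min (continuous_const.max
    ((continuous_const.mul (continuous_abs.comp Real.continuous_cos)).sub continuous_const))

open Real in
private lemma stmt18_master (a b ℓ : ℝ) (ha : 0 < a) (hb : 0 < b) (hℓ : 0 < ℓ) (n : ℕ) :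
    unifP a b {ω | (n : ℤ) ≤ normWidth a (segPt1 ω) (segPt2 ℓ ω)} =
      ENNReal.ofReal ((2 * π * a)⁻¹ *
        ∫ θ in (0:ℝ)..(2*π), min a (max 0 (ℓ * |Real.cos θ| - ((n:ℝ) - 2) * a))) := by
  have pi_pos := Real.pi_pos
  set s : ℝ := ((n:ℝ) - 2) * a with hs
  set G : ℝ → ℝ := fun θ => min a (max 0 (ℓ * |Real.cos θ| - s)) with hG
  set Dset : Set (ℝ × ℝ) :=
    {p : ℝ × ℝ | (n:ℤ) ≤ ⌈max p.1 (p.1 + ℓ * Real.cos p.2) / a⌉ -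
      ⌊min p.1 (p.1 + ℓ * Real.cos p.2) / a⌋} with hD
  have hDm : MeasurableSet Dset := by
    have hmeas : Measurable fun p : ℝ × ℝ =>
        (⌈max p.1 (p.1 + ℓ * Real.cos p.2) / a⌉
          - ⌊min p.1 (p.1 + ℓ * Real.cos p.2) / a⌋ : ℤ) := by
      apply Measurable.sub
      · apply Measurable.ceil
        apply Measurable.div_const
        exact (measurable_fst.max (measurable_fst.add (by fun_prop)))
      · apply Measurable.floor
        apply Measurable.div_const
        exact (measurable_fst.min (measurable_fst.add (by fun_prop)))
    have heq : Dset = (fun p : ℝ × ℝ =>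
        (⌈max p.1 (p.1 + ℓ * Real.cos p.2) / a⌉
          - ⌊min p.1 (p.1 + ℓ * Real.cos p.2) / a⌋ : ℤ))
          ⁻¹' (Set.Ici (n:ℤ)) := rfl
    rw [heq]
    exact hmeas ((Set.to_countable _).measurableSet)
  have hSeq : {ω : ℝ × ℝ × ℝ | (n : ℤ) ≤ normWidth a (segPt1 ω) (segPt2 ℓ ω)} =
      (fun ω : ℝ × ℝ × ℝ => (ω.1, ω.2.2)) ⁻¹' Dset := rfl
  set S : Set (ℝ × ℝ × ℝ) := {ω | (n : ℤ) ≤ normWidth a (segPt1 ω) (segPt2 ℓ ω)} with hSdef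
  have hSm : MeasurableSet S := by
    rw [hSeq]
    exact (measurable_fst.prodMk (measurable_snd.snd)) hDm
  set B : Set (ℝ × ℝ × ℝ) := Set.Ico (0:ℝ) a ×ˢ Set.Ico (0:ℝ) b ×ˢ Set.Ico (0:ℝ) (2*π)
    with hBdef
  have hBm : MeasurableSet B :=
    measurableSet_Ico.prod (measurableSet_Ico.prod measurableSet_Ico)
  set U : Set (ℝ × ℝ) := (Set.Ico (0:ℝ) a ×ˢ Set.Ico (0:ℝ) (2*π)) ∩ Dset with hU
  have hUm : MeasurableSet U := (measurableSet_Ico.prod measurableSet_Ico).inter hDm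
  have step0 : unifP a b S = (ENNReal.ofReal (2 * π * a * b))⁻¹ * volume (S ∩ B) := by
    rw [unifP, Measure.smul_apply, Measure.restrict_apply hSm, smul_eq_mul]
  have claim1 : volume (S ∩ B) = ENNReal.ofReal b * (volume.prod volume) U := by
    rw [Measure.volume_eq_prod, Measure.prod_apply (hSm.inter hBm), Measure.prod_apply hUm,
      ← lintegral_const_mul' _ _ ENNReal.ofReal_ne_top]
    apply lintegral_congr
    intro x
    rcases em (x ∈ Set.Ico (0:ℝ) a) with hx | hx
    · have hslice : Prod.mk x ⁻¹' (S ∩ B) = Set.Ico (0:ℝ) b ×ˢ (Prod.mk x ⁻¹' U) := by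
        ext ⟨y, θ⟩
        simp only [Set.mem_preimage, Set.mem_inter_iff, Set.mem_prod, hSdef, hSeq, hU, hBdef,
          Set.mem_setOf_eq, Set.mem_preimage]
        constructor
        · rintro ⟨hd, _, hy, hθ⟩; exact ⟨hy, ⟨hx, hθ⟩, hd⟩
        · rintro ⟨hy, ⟨_, hθ⟩, hd⟩; exact ⟨hd, hx, hy, hθ⟩
      rw [hslice, Measure.volume_eq_prod, Measure.prod_prod, Real.volume_Ico, sub_zero]
    · have h1 : Prod.mk x ⁻¹' (S ∩ B) = ∅ := by
        ext ⟨y, θ⟩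
        simp only [Set.mem_preimage, Set.mem_inter_iff, Set.mem_prod, hBdef,
          Set.mem_empty_iff_false, iff_false]
        rintro ⟨-, hx', -⟩; exact hx hx'
      have h2 : Prod.mk x ⁻¹' U = ∅ := by
        ext θ
        simp only [hU, Set.mem_preimage, Set.mem_inter_iff, Set.mem_prod,
          Set.mem_empty_iff_false, iff_false]
        rintro ⟨⟨hx', -⟩, -⟩; exact hx hx'
      rw [h1, h2]; simp
  have claim2 : (volume.prod volume) U
      = ∫⁻ θ in Set.Ico (0:ℝ) (2*π), ENNReal.ofReal (G θ) := by
    rw [Measure.prod_apply_symm hUm]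
    rw [← lintegral_indicator measurableSet_Ico]
    apply lintegral_congr
    intro θ
    rcases em (θ ∈ Set.Ico (0:ℝ) (2*π)) with hθ | hθ
    · have hslice : (fun x => (x, θ)) ⁻¹' U = {x : ℝ | x ∈ Set.Ico (0:ℝ) a ∧
          (n:ℤ) ≤ ⌈max x (x + ℓ * Real.cos θ) / a⌉ - ⌊min x (x + ℓ * Real.cos θ) / a⌋} := by
        ext x
        simp only [hU, Set.mem_preimage, Set.mem_inter_iff, Set.mem_prod, hD, Set.mem_setOf_eq]
        tauto
      rw [hslice, Set.indicator_of_mem hθ, stmt18_sliceVol a ha n (ℓ * Real.cos θ), hG]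
      simp only [abs_mul, abs_of_pos hℓ]
      rfl
    · have hslice : (fun x => (x, θ)) ⁻¹' U = ∅ := by
        ext x
        simp only [hU, Set.mem_preimage, Set.mem_inter_iff, Set.mem_prod,
          Set.mem_empty_iff_false, iff_false]
        rintro ⟨⟨-, hθ'⟩, -⟩; exact hθ hθ'
      rw [hslice, Set.indicator_of_notMem hθ]; simp
  have hGnonneg : ∀ θ : ℝ, 0 ≤ G θ := fun θ => le_min ha.le (le_max_left 0 _)
  have claim3 : ∫⁻ θ in Set.Ico (0:ℝ) (2*π), ENNReal.ofReal (G θ) =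
      ENNReal.ofReal (∫ θ in (0:ℝ)..(2*π), G θ) := by
    rw [← ofReal_integral_eq_lintegral_ofReal
        (((stmt18_contG a ℓ s).integrableOn_Icc (a := 0) (b := 2*π)).mono_set
          Set.Ico_subset_Icc_self)
        (Filter.Eventually.of_forall hGnonneg),
      intervalIntegral.integral_of_le (by positivity : (0:ℝ) ≤ 2*π),
      setIntegral_congr_set Ico_ae_eq_Ioc]
  rw [step0, claim1, claim2, claim3]
  rw [← ENNReal.ofReal_mul (by positivity), ← ENNReal.ofReal_inv_of_pos (by positivity),
    ← ENNReal.ofReal_mul (by positivity)]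
  congr 1
  have hb0 : b ≠ 0 := hb.ne'
  have hpa : (2 * π * a) ≠ 0 := by positivity
  field_simp

theorem stmt_18 (a b ℓ : ℝ) (ha : 0 < a) (hb : 0 < b) (hℓ : 0 < ℓ) (n : ℕ) (hn : 1 ≤ n) :
    (n = 1 →
      unifP a b {ω | (n : ℤ) ≤ normWidth a (segPt1 ω) (segPt2 ℓ ω)} = 1) ∧
    (2 ≤ n → (n : ℝ) < ℓ / a + 1 →
      unifP a b {ω | (n : ℤ) ≤ normWidth a (segPt1 ω) (segPt2 ℓ ω)} =
        ENNReal.ofReal (2 * ℓ / (Real.pi * a) *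
          (buffonF (a * ((n : ℝ) - 1) / ℓ) - buffonF (a * ((n : ℝ) - 2) / ℓ)))) ∧
    (ℓ / a + 1 ≤ (n : ℝ) → (n : ℝ) < ℓ / a + 2 →
      unifP a b {ω | (n : ℤ) ≤ normWidth a (segPt1 ω) (segPt2 ℓ ω)} =
        ENNReal.ofReal (2 * ℓ / (Real.pi * a) *
          (1 - buffonF (a * ((n : ℝ) - 2) / ℓ)))) ∧
    (ℓ / a + 2 ≤ (n : ℝ) →
      unifP a b {ω | (n : ℤ) ≤ normWidth a (segPt1 ω) (segPt2 ℓ ω)} = 0) := by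
  have pi_pos := Real.pi_pos
  have hπ : (2 : ℝ) * Real.pi = 2 * Real.pi := rfl
  refine ⟨?_, ?_, ?_, ?_⟩
  · -- n = 1
    intro h1
    subst h1
    rw [stmt18_master a b ℓ ha hb hℓ 1]
    have hconst : (∫ θ in (0:ℝ)..(2*Real.pi),
        min a (max 0 (ℓ * |Real.cos θ| - (((1:ℕ):ℝ) - 2) * a))) = 2 * Real.pi * a := by
      rw [intervalIntegral.integral_congr (g := fun _ => a), intervalIntegral.integral_const,
        smul_eq_mul, sub_zero]
      intro θ hθ
      have habs : 0 ≤ ℓ * |Real.cos θ| := by positivity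
      have : ℓ * |Real.cos θ| - (((1:ℕ):ℝ) - 2) * a = ℓ * |Real.cos θ| + a := by
        push_cast; ring
      show min a (max 0 (ℓ * |Real.cos θ| - (((1:ℕ):ℝ) - 2) * a)) = a
      rw [this, max_eq_right (by linarith), min_eq_left (by linarith)]
    rw [hconst, inv_mul_cancel₀ (by positivity), ENNReal.ofReal_one]
  · -- 2 ≤ n < ℓ/a + 1
    intro hn2 hlt
    set s : ℝ := ((n:ℝ) - 2) * a with hs
    have hn2' : (2:ℝ) ≤ (n:ℝ) := by exact_mod_cast hn2
    have hs0 : 0 ≤ s := by rw [hs]; nlinarith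
    have hsa : s + a < ℓ := by
      have : ((n:ℝ) - 1) * a < ℓ := by
        have h' : (n:ℝ) - 1 < ℓ / a := by linarith
        calc ((n:ℝ) - 1) * a < (ℓ / a) * a := by
              apply mul_lt_mul_of_pos_right h' ha
          _ = ℓ := by field_simp
      rw [hs]; nlinarith
    rw [stmt18_master a b ℓ ha hb hℓ n]
    rw [show (∫ θ in (0:ℝ)..(2*Real.pi), min a (max 0 (ℓ * |Real.cos θ| - ((n:ℝ) - 2) * a)))
        = 4 * ∫ θ in (0:ℝ)..(Real.pi/2), min a (max 0 (ℓ * Real.cos θ - s)) from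
      stmt18_quadRed (fun c => min a (max 0 (ℓ * c - s))) (continuous_const.min (continuous_const.max (by continuity)))]
    rw [stmt18_JA a ℓ s ha hℓ hs0 hsa]
    rw [show (s + a)/ℓ = a * ((n:ℝ) - 1) / ℓ by rw [hs]; ring,
      show s/ℓ = a * ((n:ℝ) - 2) / ℓ by rw [hs]; ring]
    congr 1
    have hπ0 : Real.pi ≠ 0 := Real.pi_ne_zero
    field_simp
    ring
  · -- ℓ/a + 1 ≤ n < ℓ/a + 2
    intro hge hlt
    set s : ℝ := ((n:ℝ) - 2) * a with hs
    have hla : 0 < ℓ / a := by positivity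
    have hn2' : (2:ℕ) ≤ n := by
      have h1 : (1:ℝ) < (n:ℝ) := by linarith
      exact_mod_cast Nat.one_lt_cast.1 (by exact_mod_cast h1)
    have hn2'' : (2:ℝ) ≤ (n:ℝ) := by exact_mod_cast hn2'
    have hs0 : 0 ≤ s := by rw [hs]; nlinarith
    have hsℓ : s < ℓ := by
      have h' : (n:ℝ) - 2 < ℓ / a := by linarith
      rw [hs]
      calc ((n:ℝ) - 2) * a < (ℓ / a) * a := mul_lt_mul_of_pos_right h' ha
        _ = ℓ := by field_simp
    have hℓsa : ℓ ≤ s + a := by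
      have h' : ℓ / a ≤ (n:ℝ) - 1 := by linarith
      have : (ℓ / a) * a ≤ ((n:ℝ) - 1) * a := mul_le_mul_of_nonneg_right h' ha.le
      rw [div_mul_cancel₀ ℓ ha.ne'] at this
      rw [hs]; nlinarith
    rw [stmt18_master a b ℓ ha hb hℓ n]
    rw [show (∫ θ in (0:ℝ)..(2*Real.pi), min a (max 0 (ℓ * |Real.cos θ| - ((n:ℝ) - 2) * a)))
        = 4 * ∫ θ in (0:ℝ)..(Real.pi/2), min a (max 0 (ℓ * Real.cos θ - s)) from
      stmt18_quadRed (fun c => min a (max 0 (ℓ * c - s))) (continuous_const.min (continuous_const.max (by continuity)))]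
    rw [stmt18_JB a ℓ s ha hℓ hs0 hsℓ hℓsa]
    rw [show s/ℓ = a * ((n:ℝ) - 2) / ℓ by rw [hs]; ring]
    congr 1
    have hπ0 : Real.pi ≠ 0 := Real.pi_ne_zero
    field_simp
    ring
  · -- n ≥ ℓ/a + 2
    intro hge
    rw [stmt18_master a b ℓ ha hb hℓ n]
    have hsℓ : ℓ ≤ ((n:ℝ) - 2) * a := by
      have h' : ℓ / a ≤ (n:ℝ) - 2 := by linarith
      have h2 : (ℓ / a) * a ≤ ((n:ℝ) - 2) * a := mul_le_mul_of_nonneg_right h' ha.le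
      rwa [div_mul_cancel₀ ℓ ha.ne'] at h2
    have hzero : (∫ θ in (0:ℝ)..(2*Real.pi),
        min a (max 0 (ℓ * |Real.cos θ| - ((n:ℝ) - 2) * a))) = 0 := by
      rw [intervalIntegral.integral_congr (g := fun _ => (0:ℝ))]
      · simp
      · intro θ hθ
        have habs : ℓ * |Real.cos θ| ≤ ℓ := by
          calc ℓ * |Real.cos θ| ≤ ℓ * 1 := by
                apply mul_le_mul_of_nonneg_left (Real.abs_cos_le_one θ) hℓ.le
            _ = ℓ := mul_one ℓ
        show min a (max 0 (ℓ * |Real.cos θ| - ((n:ℝ) - 2) * a)) = 0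
        rw [max_eq_left (by linarith), min_eq_right ha.le]
    rw [hzero, mul_zero, ENNReal.ofReal_zero]
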